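/- Let F_A be a free group on a nonempty set A and let κ = |F_A|. Then F_A can be partitioned into two subsets B₁ and B₂ (disjoint, with union F_A) such that neither B₁ nor B₂ is left κ-large. -/

import Mathlib

open scoped Pointwise
open Cardinal

universe u

variable {G : Type u}

/-- `A` is left `κ`-large: `G = F * A` for some `F` with `|F| < κ`. -/
def LeftLarge [Group G] (κ : Cardinal.{u}) (A : Set G) : Prop :=
  ∃ F : Set G, #F < κ ∧ F * A = Set.univ

/-- `A` is right `κ`-large: `G = A * F` for some `F` with `|F| < κ`. -/
def RightLarge [Group G] (κ : Cardinal.{u}) (A : Set G) : Prop :=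
  ∃ F : Set G, #F < κ ∧ A * F = Set.univ

/-- `A` is `κ`-large: `G = F * A * F` for some `F` with `|F| < κ`. -/
def KLarge [Group G] (κ : Cardinal.{u}) (A : Set G) : Prop :=
  ∃ F : Set G, #F < κ ∧ F * A * F = Set.univ

/-- `A` is left `κ`-thick: for every `F` with `|F| < κ` there is `a ∈ A` with `F * a ⊆ A`. -/
def LeftThick [Group G] (κ : Cardinal.{u}) (A : Set G) : Prop :=
  ∀ F : Set G, #F < κ → ∃ a ∈ A, F * {a} ⊆ A

/-- `A` is right `κ`-thick: for every `F` with `|F| < κ` there is `a ∈ A` with `a * F ⊆ A`. -/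
def RightThick [Group G] (κ : Cardinal.{u}) (A : Set G) : Prop :=
  ∀ F : Set G, #F < κ → ∃ a ∈ A, {a} * F ⊆ A

/-- `A` is `κ`-thick: for every `F` with `|F| < κ` there is `a ∈ A` with `F * a * F ⊆ A`. -/
def KThick [Group G] (κ : Cardinal.{u}) (A : Set G) : Prop :=
  ∀ F : Set G, #F < κ → ∃ a ∈ A, F * {a} * F ⊆ A

/-- `G` is `κ`-normal: every subset of size `< κ` lies in a normal subgroup of size `< κ`. -/
def KNormal (G : Type u) [Group G] (κ : Cardinal.{u}) : Prop :=
  ∀ F : Set G, #F < κ → ∃ H : Subgroup G, H.Normal ∧ #(H : Set G) < κ ∧ F ⊆ (H : Set G)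

/-- `κ` is a singular cardinal: infinite, with cofinality strictly less than `κ`. -/
def Singular (κ : Cardinal.{u}) : Prop := ℵ₀ ≤ κ ∧ κ.ord.cof < κ


section Reduce
variable {α : Type u} [DecidableEq α]

lemma countP_le_cons (a : α) (x : α × Bool) (w : List (α × Bool)) :
    List.countP (fun p => decide (p.1 = a)) w ≤ List.countP (fun p => decide (p.1 = a)) (x :: w) := by
  rw [List.countP_cons]; omega

lemma reduce_append_replicate (a : α) (b : Bool) :
    ∀ (w : List (α × Bool)) (n : ℕ), ∃ u m,
      FreeGroup.reduce (w ++ List.replicate n (a, b)) = u ++ List.replicate m (a, b) ∧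
      n ≤ m + w.countP (fun p => p.1 = a)
  | [], n => ⟨[], n, by simp [FreeGroup.reduce_replicate]⟩
  | x :: w, n => by
    obtain ⟨u, m, hu, hm⟩ := reduce_append_replicate a b w n
    have hcount := countP_le_cons a x w
    rw [List.cons_append, FreeGroup.reduce.cons, hu]
    match u, m with
    | [], 0 =>
      exact ⟨[x], 0, by simp, by simp only [List.countP_cons] at *; omega⟩
    | [], m + 1 =>
      by_cases hc : x.1 = a ∧ x.2 = !b
      · refine ⟨[], m, ?_, ?_⟩
        · simp only [List.nil_append, List.replicate_succ]
          change (if x.1 = a ∧ x.2 = !b then _ else _) = _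
          rw [if_pos hc]
        · have : (x :: w).countP (fun p => p.1 = a) = w.countP (fun p => p.1 = a) + 1 := by
            simp [List.countP_cons, hc.1]
          omega
      · refine ⟨[x], m + 1, ?_, by omega⟩
        simp only [List.nil_append, List.replicate_succ]
        change (if x.1 = a ∧ x.2 = !b then _ else _) = _
        rw [if_neg hc]
        simp [List.replicate_succ]
    | y :: u, m =>
      by_cases hc : x.1 = y.1 ∧ x.2 = !y.2
      · refine ⟨u, m, ?_, by omega⟩
        rw [List.cons_append]
        change (if x.1 = y.1 ∧ x.2 = !y.2 then _ else _) = _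
        rw [if_pos hc]
      · refine ⟨x :: y :: u, m, ?_, by omega⟩
        rw [List.cons_append]
        change (if x.1 = y.1 ∧ x.2 = !y.2 then _ else _) = _
        rw [if_neg hc]
        simp

lemma getLast_mul_replicate (f : FreeGroup α) (a : α) (b : Bool) (n : ℕ)
    (h : f.toWord.countP (fun p => p.1 = a) < n) :
    (f * FreeGroup.mk (List.replicate n (a, b))).toWord.getLast? = some (a, b) := by
  conv_lhs => rw [← FreeGroup.mk_toWord (x := f)]
  rw [FreeGroup.mul_mk, FreeGroup.toWord_mk]
  obtain ⟨u, m, hu, hm⟩ := reduce_append_replicate a b f.toWord n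
  rw [hu, List.getLast?_append]
  cases m with
  | zero => omega
  | succ m =>
    rw [List.getLast?_replicate]
    simp

end Reduce

lemma exists_fresh (A : Type u) [Nonempty A] [DecidableEq A] (F : Set (FreeGroup A))
    (hF : #F < #(FreeGroup A)) :
    ∃ (a : A) (n : ℕ), ∀ f ∈ F, (FreeGroup.toWord f).countP (fun p => p.1 = a) < n := by
  by_cases hfin : F.Finite
  · obtain ⟨a⟩ := ‹Nonempty A›
    refine ⟨a, 1 + hfin.toFinset.sup (fun f => f.toWord.length), fun f hf => ?_⟩
    have h1 : f.toWord.countP (fun p => p.1 = a) ≤ f.toWord.length := List.countP_le_length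
    have h2 : f.toWord.length ≤ hfin.toFinset.sup (fun f => f.toWord.length) :=
      Finset.le_sup (f := fun f : FreeGroup A => f.toWord.length) (hfin.mem_toFinset.2 hf)
    omega
  · have hFinf : ℵ₀ ≤ #F := by
      rw [aleph0_le_mk_iff, Set.infinite_coe_iff]; exact hfin
    rw [mk_freeGroup] at hF
    have hA : ℵ₀ < #A := by
      by_contra h
      push_neg at h
      rw [max_eq_right h] at hF
      exact absurd hFinf (not_le.2 hF)
    rw [max_eq_left hA.le] at hF
    set S : Set A := ⋃ (f : F), {x | x ∈ ((f : FreeGroup A).toWord.map Prod.fst)} with hS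
    have hScard : #S < #A := by
      refine lt_of_le_of_lt (mk_iUnion_le _) ?_
      refine mul_lt_of_lt hA.le hF (lt_of_le_of_lt ?_ hA)
      refine ciSup_le' fun f => ?_
      exact le_of_lt (Set.Finite.lt_aleph0 (List.finite_toSet _))
    have : ∃ a, a ∉ S := by
      by_contra h
      push_neg at h
      have : S = Set.univ := Set.eq_univ_iff_forall.2 h
      rw [this, Cardinal.mk_univ] at hScard
      exact absurd hScard (lt_irrefl _)
    obtain ⟨a, ha⟩ := this
    refine ⟨a, 1, fun f hf => ?_⟩
    have : f.toWord.countP (fun p => p.1 = a) = 0 := by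
      rw [List.countP_eq_zero]
      rintro p hp hpa
      exact ha (Set.mem_iUnion.2 ⟨⟨f, hf⟩, List.mem_map.2 ⟨p, hp, by simpa using hpa⟩⟩)
    omega


/-- Every free group `F_A` (on a nonempty set `A`) can be partitioned
into two subsets, neither of which is left `κ`-large, where `κ = |F_A|`. -/
theorem freeGroup_partition_two_not_leftLarge (A : Type u) [Nonempty A] :
    ∃ B₁ B₂ : Set (FreeGroup A), Disjoint B₁ B₂ ∧ B₁ ∪ B₂ = Set.univ ∧
      ¬ LeftLarge (#(FreeGroup A)) B₁ ∧ ¬ LeftLarge (#(FreeGroup A)) B₂ := by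
  classical
  set B : Set (FreeGroup A) := {g | ∀ p ∈ g.toWord.getLast?, p.2 = true} with hBdef
  have hinvcard : ∀ F : Set (FreeGroup A), #F < #(FreeGroup A) → #↥(F⁻¹) < #(FreeGroup A) := by
    intro F hFc
    rwa [← Set.image_inv_eq_inv, Cardinal.mk_image_eq inv_injective]
  refine ⟨B, Bᶜ, disjoint_compl_right, Set.union_compl_self B, ?_, ?_⟩
  · rintro ⟨F, hFc, hFB⟩
    obtain ⟨a, n, ha⟩ := exists_fresh A F⁻¹ (hinvcard F hFc)
    have hg : FreeGroup.mk (List.replicate n (a, false)) ∈ F * B := by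
      rw [hFB]; exact Set.mem_univ _
    rw [Set.mem_mul] at hg
    obtain ⟨f, hf, x, hx, hfx⟩ := hg
    have hxval : x = f⁻¹ * FreeGroup.mk (List.replicate n (a, false)) := by
      rw [← hfx]; group
    have hlast := getLast_mul_replicate (α := A) f⁻¹ a false n (ha _ (Set.inv_mem_inv.2 hf))
    rw [← hxval] at hlast
    have := hx (a, false) (by rw [hlast]; exact Option.mem_def.2 rfl)
    simp at this
  · rintro ⟨F, hFc, hFB⟩
    obtain ⟨a, n, ha⟩ := exists_fresh A F⁻¹ (hinvcard F hFc)
    have hg : FreeGroup.mk (List.replicate n (a, true)) ∈ F * Bᶜ := by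
      rw [hFB]; exact Set.mem_univ _
    rw [Set.mem_mul] at hg
    obtain ⟨f, hf, x, hx, hfx⟩ := hg
    have hxval : x = f⁻¹ * FreeGroup.mk (List.replicate n (a, true)) := by
      rw [← hfx]; group
    have hlast := getLast_mul_replicate (α := A) f⁻¹ a true n (ha _ (Set.inv_mem_inv.2 hf))
    rw [← hxval] at hlast
    refine hx (show x ∈ B from fun p hp => ?_)
    rw [hlast, Option.mem_def, Option.some.injEq] at hp
    rw [← hp]
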